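/- Let λ, α, β, v^b, v^a, q^b, q^a be real numbers with βv^b + αv^a ≠ 0. Define Q^b(t) = −(α q^a v^b − α q^b v^a + λ v^b)/(α v^a + β v^b) + (v^b (β q^b + α q^a + λ)/(β v^b + α v^a))·e^{−(v^bβ + v^aα)t} and Q^a(t) = −(β q^b v^a − β q^a v^b + λ v^a)/(α v^a + β v^b) + (v^a (β q^b + α q^a + λ)/(β v^b + α v^a))·e^{−(v^bβ + v^aα)t}. Then Q^b(0) = q^b, Q^a(0) = q^a, and for all t ∈ ℝ, (Q^b)′(t) = −(λ + β Q^b(t) + α Q^a(t))·v^b and (Q^a)′(t) = −(λ + β Q^b(t) + α Q^a(t))·v^a. -/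

import Mathlib

open Real

/-- Explicit solution of the coupled linear fluid-limit ODE system for the best bid
and ask queues under queue-length-dependent arrival intensity: the stated functions
satisfy `Qᵇ(0) = qᵇ`, `Qᵃ(0) = qᵃ`, and
`(Qᵇ)'(t) = -(λ + βQᵇ(t) + αQᵃ(t))vᵇ`, `(Qᵃ)'(t) = -(λ + βQᵇ(t) + αQᵃ(t))vᵃ`. -/
theorem linear_intensity_fluid_limit_ode
    (lam α β vb va qb qa : ℝ) (h : β * vb + α * va ≠ 0)
    (Qb Qa : ℝ → ℝ)
    (hQb : ∀ t, Qb t = -(α * qa * vb - α * qb * va + lam * vb) / (α * va + β * vb)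
        + (vb * (β * qb + α * qa + lam) / (β * vb + α * va)) *
          Real.exp (-(vb * β + va * α) * t))
    (hQa : ∀ t, Qa t = -(β * qb * va - β * qa * vb + lam * va) / (α * va + β * vb)
        + (va * (β * qb + α * qa + lam) / (β * vb + α * va)) *
          Real.exp (-(vb * β + va * α) * t)) :
    Qb 0 = qb ∧ Qa 0 = qa ∧
    (∀ t, HasDerivAt Qb (-(lam + β * Qb t + α * Qa t) * vb) t) ∧
    (∀ t, HasDerivAt Qa (-(lam + β * Qb t + α * Qa t) * va) t) := by
  have h' : α * va + β * vb ≠ 0 := by rw [add_comm]; exact h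
  have key : ∀ t, ∀ c1 c2 : ℝ,
      HasDerivAt (fun t => c1 + c2 * Real.exp (-(vb * β + va * α) * t))
        (c2 * (-(vb * β + va * α) * Real.exp (-(vb * β + va * α) * t))) t := by
    intro t c1 c2
    have h1 : HasDerivAt (fun t : ℝ => -(vb * β + va * α) * t) (-(vb * β + va * α)) t := by
      simpa using (hasDerivAt_id t).const_mul (-(vb * β + va * α))
    have h2 := h1.exp
    have := (h2.const_mul c2).const_add c1
    rw [show c2 * (-(vb * β + va * α) * Real.exp (-(vb * β + va * α) * t)) = c2 * (Real.exp (-(vb * β + va * α) * t) * -(vb * β + va * α)) by ring]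
    exact this
  refine ⟨?_, ?_, ?_, ?_⟩
  · rw [hQb 0]; simp; field_simp; rw [div_add_div _ _ (by intro hx; apply h; linarith) (by intro hx; apply h; linarith), div_eq_iff (mul_ne_zero (by intro hx; apply h; linarith) (by intro hx; apply h; linarith))]; ring
  · rw [hQa 0]; simp; field_simp; rw [div_add_div _ _ (by intro hx; apply h; linarith) (by intro hx; apply h; linarith), div_eq_iff (mul_ne_zero (by intro hx; apply h; linarith) (by intro hx; apply h; linarith))]; ring
  · intro t
    have := key t (-(α * qa * vb - α * qb * va + lam * vb) / (α * va + β * vb))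
      (vb * (β * qb + α * qa + lam) / (β * vb + α * va))
    have heq : Qb = _ := funext hQb
    rw [heq]
    convert this using 1
    beta_reduce
    rw [hQa t]
    field_simp
    ring
  · intro t
    have := key t (-(β * qb * va - β * qa * vb + lam * va) / (α * va + β * vb))
      (va * (β * qb + α * qa + lam) / (β * vb + α * va))
    have heq : Qa = _ := funext hQa
    rw [heq]
    convert this using 1
    beta_reduce
    rw [hQb t]
    field_simp
    ring
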